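/- Let p > 0, N ≥ 2, χ > 0, equal weights wᵢ = 1/N, and let Ẽ_N^p be the unconfined p-approximated discrete Keller–Segel energy on the open set U = {x ∈ ℝ^N : x₁ < ⋯ < x_N}. Suppose x : [0,T) → U (with T ∈ (0,∞]) has differentiable coordinates and satisfies, for every t ∈ [0,T) and every i, (1/N) xᵢ'(t) = −(∂Ẽ_N^p/∂xᵢ)(x(t)). Then the second moment M₂(t) = (1/N) Σᵢ₌₁^N xᵢ(t)² is differentiable on [0,T) with constant derivative M₂'(t) = 2(1 − 1/N)(χ₂(N) − χ), where χ₂(N) = 1 + 1/(N−1). -/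

import Mathlib

open Real Finset
open scoped ENNReal

/-- `rᵢᵖ = min_p(Δxᵢ, Δxᵢ₊₁) = ((Δxᵢ^{−p} + Δxᵢ₊₁^{−p})/2)^{−1/p}`, with the boundary
convention `r₁ᵖ = 2^{1/p} Δx₂` and `r_Nᵖ = 2^{1/p} Δx_N`, for `N = n + 2` particles
indexed from `0` to `n+1`. -/
noncomputable def rballp (p : ℝ) (n : ℕ) (x : Fin (n + 2) → ℝ) (i : Fin (n + 2)) : ℝ :=
  if i.val = 0 then (2 : ℝ) ^ (1 / p) * (x 1 - x 0)
  else if i.val = n + 1 then (2 : ℝ) ^ (1 / p) * (x i - x (i - 1))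
  else (((x i - x (i - 1)) ^ (-p) + (x (i + 1) - x i) ^ (-p)) / 2) ^ (-1 / p)

/-- The unconfined `p`-approximated discrete modified Keller–Segel energy with equal
weights `wᵢ = 1/N`, `N = n + 2`:
`Ẽ_N^p(x) = Σᵢ (1/N) log(1/(N rᵢᵖ)) + (χ/N²) Σᵢ Σ_{j≠i} log|xᵢ − xⱼ|`. -/
noncomputable def kspEnergy (p : ℝ) (n : ℕ) (χ : ℝ) (x : Fin (n + 2) → ℝ) : ℝ :=
  ∑ i, (1 / ((n : ℝ) + 2)) * Real.log (1 / (((n : ℝ) + 2) * rballp p n x i)) +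
    (χ / ((n : ℝ) + 2) ^ 2) * ∑ i, ∑ j ∈ Finset.univ.erase i, Real.log |x i - x j|

lemma sub_pred_pos {n : ℕ} {y : Fin (n+2) → ℝ} (hy : StrictMono y) {i : Fin (n+2)}
    (h : i.val ≠ 0) : 0 < y i - y (i - 1) := by
  have : (i - 1) < i := by
    rw [Fin.lt_def, Fin.coe_sub_one, if_neg (by intro hi; subst hi; simp at h)]
    omega
  linarith [hy this]

lemma succ_sub_pos {n : ℕ} {y : Fin (n+2) → ℝ} (hy : StrictMono y) {i : Fin (n+2)}
    (h : i.val ≠ n+1) : 0 < y (i + 1) - y i := by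
  have : i < i + 1 := by
    rw [Fin.lt_def, Fin.val_add_one, if_neg (by simp [Fin.ext_iff, Fin.val_last]; omega)]
    omega
  linarith [hy this]

lemma rballp_pos {p : ℝ} (hp : 0 < p) {n : ℕ} {y : Fin (n+2) → ℝ} (hy : StrictMono y)
    (i : Fin (n+2)) : 0 < rballp p n y i := by
  unfold rballp
  split_ifs with h0 h1
  · have h01 : y 0 < y 1 := hy (by simp [Fin.lt_def])
    exact mul_pos (Real.rpow_pos_of_pos two_pos _) (by linarith)
  · exact mul_pos (Real.rpow_pos_of_pos two_pos _) (sub_pred_pos hy h0)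
  · have h1' := Real.rpow_pos_of_pos (sub_pred_pos hy h0) (-p)
    have h2' := Real.rpow_pos_of_pos (succ_sub_pos hy h1) (-p)
    exact Real.rpow_pos_of_pos (by linarith) _

lemma rballp_smul {p : ℝ} (hp : 0 < p) {n : ℕ} {y : Fin (n+2) → ℝ} (hy : StrictMono y)
    {l : ℝ} (hl : 0 < l) (i : Fin (n+2)) :
    rballp p n (l • y) i = l * rballp p n y i := by
  unfold rballp
  have key : ∀ a b : ℝ, 0 < a → 0 < b →
      (((l*a) ^ (-p) + (l*b) ^ (-p))/2) ^ (-1/p)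
        = l * ((a ^ (-p) + b ^ (-p))/2) ^ (-1/p) := by
    intro a b ha hb
    rw [Real.mul_rpow hl.le ha.le, Real.mul_rpow hl.le hb.le, ← mul_add, mul_div_assoc,
      Real.mul_rpow (by positivity) (by positivity), ← Real.rpow_mul hl.le,
      show (-p) * (-1/p) = 1 by field_simp, Real.rpow_one]
  split_ifs with h0 h1
  · simp only [Pi.smul_apply, smul_eq_mul]; ring
  · simp only [Pi.smul_apply, smul_eq_mul]; ring
  · simp only [Pi.smul_apply, smul_eq_mul]
    rw [← mul_sub, ← mul_sub]
    exact key _ _ (sub_pred_pos hy h0) (succ_sub_pos hy h1)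

lemma rballp_diff {p : ℝ} (hp : 0 < p) {n : ℕ} {y : Fin (n+2) → ℝ} (hy : StrictMono y)
    (i : Fin (n+2)) : DifferentiableAt ℝ (fun x => rballp p n x i) y := by
  have hc : ∀ j : Fin (n+2), DifferentiableAt ℝ (fun x : Fin (n+2) → ℝ => x j) y :=
    fun j => (ContinuousLinearMap.proj (R := ℝ) (φ := fun _ : Fin (n+2) => ℝ) j).differentiableAt
  unfold rballp
  split_ifs with h0 h1
  · exact ((hc 1).sub (hc 0)).const_mul _
  · exact ((hc i).sub (hc (i-1))).const_mul _
  · have d1 := sub_pred_pos hy h0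
    have d2 := succ_sub_pos hy h1
    have hA1 : DifferentiableAt ℝ (fun x : Fin (n+2) → ℝ => (x i - x (i-1)) ^ (-p)) y :=
      ((hc i).sub (hc (i-1))).rpow_const (Or.inl d1.ne')
    have hA2 : DifferentiableAt ℝ (fun x : Fin (n+2) → ℝ => (x (i+1) - x i) ^ (-p)) y :=
      ((hc (i+1)).sub (hc i)).rpow_const (Or.inl d2.ne')
    have hA : DifferentiableAt ℝ (fun x : Fin (n+2) → ℝ =>
        ((x i - x (i-1)) ^ (-p) + (x (i+1) - x i) ^ (-p)) / 2) y := by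
      simpa only [div_eq_mul_inv] using (hA1.fun_add hA2).mul_const ((2:ℝ)⁻¹)
    have hApos : 0 < ((y i - y (i-1)) ^ (-p) + (y (i+1) - y i) ^ (-p)) / 2 := by
      have := Real.rpow_pos_of_pos d1 (-p); have := Real.rpow_pos_of_pos d2 (-p); linarith
    exact hA.rpow_const (Or.inl hApos.ne')
lemma kspEnergy_diff {p : ℝ} (hp : 0 < p) {n : ℕ} (χ : ℝ) {y : Fin (n+2) → ℝ}
    (hy : StrictMono y) : DifferentiableAt ℝ (kspEnergy p n χ) y := by
  have hc : ∀ j : Fin (n+2), DifferentiableAt ℝ (fun x : Fin (n+2) → ℝ => x j) y :=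
    fun j => (ContinuousLinearMap.proj (R := ℝ) (φ := fun _ : Fin (n+2) => ℝ) j).differentiableAt
  have hN : (0:ℝ) < (n:ℝ)+2 := by positivity
  unfold kspEnergy
  apply DifferentiableAt.add
  · apply DifferentiableAt.fun_sum
    intro i _
    apply DifferentiableAt.const_mul
    have hr := rballp_pos hp hy i
    have harg : DifferentiableAt ℝ (fun x => 1 / (((n:ℝ)+2) * rballp p n x i)) y := by
      simpa only [one_div] using ((rballp_diff hp hy i).const_mul ((n:ℝ)+2)).fun_inv
        (ne_of_gt (mul_pos hN hr))
    exact harg.log (ne_of_gt (by positivity))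
  · apply DifferentiableAt.const_mul
    apply DifferentiableAt.fun_sum
    intro i _
    apply DifferentiableAt.fun_sum
    intro j hj
    have hij : y i - y j ≠ 0 :=
      sub_ne_zero.mpr (hy.injective.ne ((Finset.mem_erase.mp hj).1).symm)
    have : (fun x : Fin (n+2) → ℝ => Real.log |x i - x j|)
        = fun x => Real.log (x i - x j) := funext fun x => Real.log_abs _
    rw [this]
    exact ((hc i).sub (hc j)).log hij

lemma kspEnergy_smul {p : ℝ} (hp : 0 < p) {n : ℕ} (χ : ℝ) {y : Fin (n+2) → ℝ}
    (hy : StrictMono y) {l : ℝ} (hl : 0 < l) :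
    kspEnergy p n χ (l • y) = kspEnergy p n χ y
      + (-1 + χ * ((n:ℝ)+1) / ((n:ℝ)+2)) * Real.log l := by
  have hN : (0:ℝ) < (n:ℝ)+2 := by positivity
  have h1 : ∀ i : Fin (n+2), Real.log (1/(((n:ℝ)+2) * rballp p n (l•y) i))
      = Real.log (1/(((n:ℝ)+2) * rballp p n y i)) - Real.log l := by
    intro i
    have hr := rballp_pos hp hy i
    rw [rballp_smul hp hy hl i,
      show ((n:ℝ)+2) * (l * rballp p n y i) = (((n:ℝ)+2) * rballp p n y i) * l by ring,
      one_div, mul_inv, Real.log_mul (inv_ne_zero (ne_of_gt (mul_pos hN hr)))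
        (inv_ne_zero hl.ne'), Real.log_inv l, ← one_div]
    ring
  have h2 : ∀ i : Fin (n+2), ∀ j ∈ Finset.univ.erase i,
      Real.log |(l•y) i - (l•y) j| = Real.log l + Real.log |y i - y j| := by
    intro i j hj
    have hij : y i - y j ≠ 0 :=
      sub_ne_zero.mpr (hy.injective.ne ((Finset.mem_erase.mp hj).1).symm)
    simp only [Pi.smul_apply, smul_eq_mul]
    rw [← mul_sub, Real.log_abs, Real.log_abs, Real.log_mul hl.ne' hij]
  unfold kspEnergy
  have e1 : ∑ i, (1 / ((n:ℝ)+2)) * Real.log (1 / (((n:ℝ)+2) * rballp p n (l•y) i))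
      = (∑ i, (1 / ((n:ℝ)+2)) * Real.log (1 / (((n:ℝ)+2) * rballp p n y i))) - Real.log l := by
    simp only [h1, mul_sub, Finset.sum_sub_distrib, Finset.sum_const, Finset.card_univ,
      Fintype.card_fin, nsmul_eq_mul]
    have : ((n:ℝ)+2) * ((1/((n:ℝ)+2)) * Real.log l) = Real.log l := by field_simp
    push_cast
    rw [this]
  have e2 : ∑ i, ∑ j ∈ Finset.univ.erase i, Real.log |(l•y) i - (l•y) j|
      = (∑ i, ∑ j ∈ Finset.univ.erase i, Real.log |y i - y j|)
        + ((n:ℝ)+2)*((n:ℝ)+1) * Real.log l := by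
    have inner : ∀ i : Fin (n+2), ∑ j ∈ Finset.univ.erase i, Real.log |(l•y) i - (l•y) j|
        = (∑ j ∈ Finset.univ.erase i, Real.log |y i - y j|) + ((n:ℝ)+1) * Real.log l := by
      intro i
      rw [Finset.sum_congr rfl (h2 i)]
      simp only [Finset.sum_add_distrib, Finset.sum_const,
        Finset.card_erase_of_mem (Finset.mem_univ i), Finset.card_univ, Fintype.card_fin,
        nsmul_eq_mul]
      push_cast
      ring
    simp only [inner, Finset.sum_add_distrib, Finset.sum_const, Finset.card_univ,
      Fintype.card_fin, nsmul_eq_mul]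
    push_cast
    ring
  rw [e1, e2]
  field_simp
  ring

lemma kspEnergy_fderiv_self {p : ℝ} (hp : 0 < p) {n : ℕ} (χ : ℝ) {y : Fin (n+2) → ℝ}
    (hy : StrictMono y) :
    fderiv ℝ (kspEnergy p n χ) y y = -1 + χ * ((n:ℝ)+1) / ((n:ℝ)+2) := by
  have hdiff := kspEnergy_diff hp χ hy
  have hs : HasDerivAt (fun l : ℝ => l • y) y 1 := by
    simpa using (hasDerivAt_id (1:ℝ)).smul_const y
  have h1 : HasDerivAt (fun l : ℝ => kspEnergy p n χ (l • y))
      (fderiv ℝ (kspEnergy p n χ) y y) 1 := by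
    have hF : HasFDerivAt (kspEnergy p n χ) (fderiv ℝ (kspEnergy p n χ) y) ((1:ℝ) • y) := by
      rw [one_smul]; exact hdiff.hasFDerivAt
    exact hF.comp_hasDerivAt 1 hs
  have h2 : HasDerivAt (fun l : ℝ => kspEnergy p n χ y
      + (-1 + χ*((n:ℝ)+1)/((n:ℝ)+2)) * Real.log l) (-1 + χ*((n:ℝ)+1)/((n:ℝ)+2)) 1 := by
    simpa using ((Real.hasDerivAt_log one_ne_zero).const_mul
      (-1 + χ*((n:ℝ)+1)/((n:ℝ)+2))).const_add (kspEnergy p n χ y)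
  have heq : (fun l : ℝ => kspEnergy p n χ (l • y))
      =ᶠ[nhds 1] (fun l : ℝ => kspEnergy p n χ y
        + (-1 + χ*((n:ℝ)+1)/((n:ℝ)+2)) * Real.log l) := by
    filter_upwards [Ioi_mem_nhds (by norm_num : (0:ℝ) < 1)] with l hl
    exact kspEnergy_smul hp χ hy hl
  exact h1.unique (h2.congr_of_eventuallyEq heq)
/-- along any solution of the `p`-approximated discrete unconfined
Keller–Segel gradient flow `(1/N) xᵢ' = −∂Ẽ_N^p/∂xᵢ` on `[0,T)`, the second moment
`M₂(t) = (1/N) Σᵢ xᵢ(t)²` has constant derivative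
`M₂'(t) = 2(1 − 1/N)(χ₂(N) − χ)` with `χ₂(N) = 1 + 1/(N−1)`. -/
theorem ksp_second_moment_derivative (p : ℝ) (hp : 0 < p) (n : ℕ) (χ : ℝ) (hχ : 0 < χ)
    (T : ℝ≥0∞) (hT : 0 < T) (x : ℝ → Fin (n + 2) → ℝ)
    (hmem : ∀ t : ℝ, 0 ≤ t → ENNReal.ofReal t < T → StrictMono (x t))
    (hflow : ∀ t : ℝ, 0 ≤ t → ENNReal.ofReal t < T → ∀ i : Fin (n + 2),
      HasDerivAt (fun s => x s i)
        (-((n : ℝ) + 2) * fderiv ℝ (kspEnergy p n χ) (x t) (Pi.single i 1)) t) :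
    ∀ t : ℝ, 0 ≤ t → ENNReal.ofReal t < T →
      HasDerivAt (fun s => (1 / ((n : ℝ) + 2)) * ∑ i, (x s i) ^ 2)
        (2 * (1 - 1 / ((n : ℝ) + 2)) * ((1 + 1 / ((n : ℝ) + 1)) - χ)) t := by

  intro t ht hT'
  have hy := hmem t ht hT'
  have hN : (0:ℝ) < (n:ℝ)+2 := by positivity
  set L := fderiv ℝ (kspEnergy p n χ) (x t) with hL
  have hsum : HasDerivAt (fun s => ∑ i, (x s i)^2)
      (∑ i, (2:ℝ) * x t i ^ 1 * (-((n:ℝ)+2) * L (Pi.single i 1))) t :=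
    HasDerivAt.fun_sum (fun i _ => (hflow t ht hT' i).pow 2)
  have hM := hsum.const_mul (1/((n:ℝ)+2))
  refine hM.congr_deriv ?_
  have hx : ∑ i, x t i • (Pi.single i (1:ℝ) : Fin (n+2) → ℝ) = x t := by
    have : ∀ i : Fin (n+2), x t i • (Pi.single i (1:ℝ) : Fin (n+2) → ℝ)
        = Pi.single i (x t i) := by
      intro i
      rw [← Pi.single_smul, smul_eq_mul, mul_one]
    rw [Finset.sum_congr rfl (fun i _ => this i), Finset.univ_sum_single]
  have hLx : L (x t) = ∑ i, x t i * L (Pi.single i 1) := by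
    conv_lhs => rw [← hx]
    rw [map_sum]
    exact Finset.sum_congr rfl fun i _ => by rw [map_smul, smul_eq_mul]
  have heu : L (x t) = -1 + χ * ((n:ℝ)+1) / ((n:ℝ)+2) := kspEnergy_fderiv_self hp χ hy
  have e : ∑ i, (2:ℝ) * x t i ^ 1 * (-((n:ℝ)+2) * L (Pi.single i 1))
      = -2*((n:ℝ)+2) * ∑ i, x t i * L (Pi.single i 1) := by
    rw [Finset.mul_sum]
    exact Finset.sum_congr rfl fun i _ => by ring
  rw [e, ← hLx, heu]
  have hn1 : (0:ℝ) < (n:ℝ)+1 := by positivity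
  field_simp
  ring
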